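/- Let K = (0,ε)³ be a unit lattice cell of side ε > 0 and let v : closure(K) → ℝ be continuous and piecewise affine with respect to a type A decomposition of K into six tetrahedra. Then for each coordinate direction α ∈ {1,2,3}, ∫_K ∂_α v(x) dx equals (ε³/6) times the sum over the six tetrahedra T of the difference quotient of v along the edge of T in direction e_α divided by ε. In particular, for a single tetrahedron T of the decomposition, ∫_T ∇v dx = (ε³/6) ∇̃v|_T, where ∇̃v|_T is the matrix of difference quotients of v along the three edges of T parallel to coordinate axes. -/

import Mathlib

open MeasureTheory
open scoped RealInnerProductSpace

noncomputable section

/-- ℝ³ as a Euclidean space. -/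
abbrev E3 := EuclideanSpace ℝ (Fin 3)

/-- Build a point of `E3` from a plain function. -/
def ev (f : Fin 3 → ℝ) : E3 := WithLp.toLp 2 f

/-- The `α`-th standard basis vector of ℝ³. -/
def e3 (α : Fin 3) : E3 := EuclideanSpace.single α 1

/-- The open cube `(0,ε)³`. -/
def cellK (ε : ℝ) : Set E3 := {x | ∀ i, x i ∈ Set.Ioo 0 ε}

/-- The (closed) tetrahedron of the type A (Kuhn) decomposition of the cube `[0,ε]³`
associated to the permutation `σ`.  The six tetrahedra obtained in this way have as edges
the main diagonal from `0` to `(ε,ε,ε)`, the face diagonals emanating from `0` and from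
`(ε,ε,ε)`, and the cube edges. -/
def kuhnTet (ε : ℝ) (σ : Equiv.Perm (Fin 3)) : Set E3 :=
  {x | 0 ≤ x (σ 0) ∧ x (σ 0) ≤ x (σ 1) ∧ x (σ 1) ≤ x (σ 2) ∧ x (σ 2) ≤ ε}

/-- The starting point of the unique edge of the tetrahedron `kuhnTet ε σ` that is
parallel to the coordinate direction `e_α`; the edge runs from `qEdge ε σ α` to
`qEdge ε σ α + ε • e3 α`. -/
def qEdge (ε : ℝ) (σ : Equiv.Perm (Fin 3)) (α : Fin 3) : E3 :=
  ev fun i => if σ.symm α < σ.symm i then ε else 0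

namespace Stmt5Aux

lemma tet_closed (ε : ℝ) (σ : Equiv.Perm (Fin 3)) : IsClosed (kuhnTet ε σ) := by
  have h : kuhnTet ε σ = {x : E3 | 0 ≤ x (σ 0)} ∩ {x | x (σ 0) ≤ x (σ 1)} ∩
      {x | x (σ 1) ≤ x (σ 2)} ∩ {x | x (σ 2) ≤ ε} := by
    ext x; simp [kuhnTet, and_assoc]
  rw [h]
  have c0 : Continuous fun x : E3 => x (σ 0) := PiLp.continuous_apply 2 _ _
  have c1 : Continuous fun x : E3 => x (σ 1) := PiLp.continuous_apply 2 _ _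
  have c2 : Continuous fun x : E3 => x (σ 2) := PiLp.continuous_apply 2 _ _
  exact (((isClosed_le continuous_const c0).inter (isClosed_le c0 c1)).inter
    (isClosed_le c1 c2)).inter (isClosed_le c2 continuous_const)

lemma tet_meas (ε : ℝ) (σ : Equiv.Perm (Fin 3)) : MeasurableSet (kuhnTet ε σ) :=
  (tet_closed ε σ).measurableSet

lemma tet_convex (ε : ℝ) (σ : Equiv.Perm (Fin 3)) : Convex ℝ (kuhnTet ε σ) := by
  intro x hx y hy p q hp hq hpq
  obtain ⟨h1, h2, h3, h4⟩ := hx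
  obtain ⟨k1, k2, k3, k4⟩ := hy
  refine ⟨?_, ?_, ?_, ?_⟩ <;>
    simp only [PiLp.add_apply, PiLp.smul_apply, smul_eq_mul] <;> nlinarith

def proj3 (i : Fin 3) : E3 →ₗ[ℝ] ℝ where
  toFun x := x i
  map_add' a b := by simp
  map_smul' c a := by simp

lemma proj3_apply (i : Fin 3) (x : E3) : proj3 i x = x i := rfl

lemma null_level_set (f : E3 →ₗ[ℝ] ℝ) (y : E3) (hy : f y ≠ 0) (c : ℝ) :
    volume {x : E3 | f x = c} = 0 := by
  have hker : volume (LinearMap.ker f : Set E3) = 0 := by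
    refine Measure.addHaar_submodule volume _ fun h => hy ?_
    have : y ∈ LinearMap.ker f := h ▸ Submodule.mem_top
    simpa using this
  set z := (c / f y) • y with hzdef
  have hz : f z = c := by
    simp only [hzdef, _root_.map_smul, smul_eq_mul]
    field_simp
  have hset : {x : E3 | f x = c} = (fun x => -z + x) ⁻¹' (LinearMap.ker f : Set E3) := by
    ext x
    simp only [Set.mem_setOf_eq, Set.mem_preimage, SetLike.mem_coe, LinearMap.mem_ker,
      map_add, map_neg, hz]
    constructor <;> intro h <;> linarith
  rw [hset, measure_preimage_add]
  exact hker

lemma null_diag (i j : Fin 3) (hij : i ≠ j) : volume {x : E3 | x i = x j} = 0 := by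
  have h := null_level_set (proj3 i - proj3 j) (e3 i) ?_ 0
  · have : {x : E3 | x i = x j} = {x : E3 | (proj3 i - proj3 j) x = 0} := by
      ext x; simp [proj3_apply, sub_eq_zero]
    rw [this]; exact h
  · simp [proj3_apply, e3, EuclideanSpace.single_apply, hij.symm]

lemma null_coord (i : Fin 3) (c : ℝ) : volume {x : E3 | x i = c} = 0 := by
  have h := null_level_set (proj3 i) (e3 i) ?_ c
  · exact h
  · simp [proj3_apply, e3, EuclideanSpace.single_apply]

def permIso (π : Equiv.Perm (Fin 3)) : E3 ≃ₗᵢ[ℝ] E3 :=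
  LinearIsometryEquiv.piLpCongrLeft 2 ℝ ℝ π

lemma permIso_apply (π : Equiv.Perm (Fin 3)) (x : E3) (i : Fin 3) :
    permIso π x i = x (π.symm i) := by
  simp [permIso, LinearIsometryEquiv.piLpCongrLeft_apply, Equiv.piCongrLeft'_apply]

lemma permIso_preimage (ε : ℝ) (σ π : Equiv.Perm (Fin 3)) :
    permIso π ⁻¹' kuhnTet ε σ = kuhnTet ε (σ.trans π.symm) := by
  ext x
  simp [kuhnTet, permIso_apply, Equiv.trans_apply]

def cube (ε : ℝ) : Set E3 := {x | ∀ i, x i ∈ Set.Icc 0 ε}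

lemma cube_eq_iUnion (ε : ℝ) : cube ε = ⋃ σ : Equiv.Perm (Fin 3), kuhnTet ε σ := by
  ext x
  constructor
  · intro hx
    refine Set.mem_iUnion.2 ⟨Tuple.sort x, ?_⟩
    have hm : Monotone (x ∘ Tuple.sort x) := Tuple.monotone_sort x
    refine ⟨(hx _).1, hm (by decide : (0:Fin 3) ≤ 1), hm (by decide : (1:Fin 3) ≤ 2), (hx _).2⟩
  · intro hx
    obtain ⟨σ, h1, h2, h3, h4⟩ := Set.mem_iUnion.1 hx
    intro i
    have key : ∀ j : Fin 3, 0 ≤ x (σ j) ∧ x (σ j) ≤ ε := by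
      intro j
      fin_cases j
      · exact ⟨h1, le_trans h2 (le_trans h3 h4)⟩
      · exact ⟨le_trans h1 h2, le_trans h3 h4⟩
      · exact ⟨le_trans h1 (le_trans h2 h3), h4⟩
    have := key (σ.symm i)
    rwa [Equiv.apply_symm_apply] at this

lemma cube_volume (ε : ℝ) (hε : 0 < ε) : volume (cube ε) = ENNReal.ofReal (ε ^ 3) := by
  have hpre : cube ε =
      (MeasurableEquiv.toLp 2 (Fin 3 → ℝ)).symm ⁻¹' (Set.univ.pi fun _ => Set.Icc (0:ℝ) ε) := by
    ext x
    simp only [Set.mem_preimage, Set.mem_pi, Set.mem_univ, true_implies, Set.mem_Icc,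
      cube, Set.mem_setOf_eq]
    exact Iff.rfl
  rw [hpre, (EuclideanSpace.volume_preserving_symm_measurableEquiv_toLp (Fin 3)).measure_preimage
    ((MeasurableSet.univ_pi fun _ => measurableSet_Icc).nullMeasurableSet)]
  rw [volume_pi_pi]
  simp [Real.volume_Icc, ← ENNReal.ofReal_pow hε.le]

lemma null_noninj : volume {x : E3 | ∃ i j, i ≠ j ∧ x i = x j} = 0 := by
  have hsub : {x : E3 | ∃ i j, i ≠ j ∧ x i = x j} ⊆
      ⋃ p : Fin 3 × Fin 3, {x : E3 | p.1 ≠ p.2 ∧ x p.1 = x p.2} := by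
    rintro x ⟨i, j, hij, hx⟩
    exact Set.mem_iUnion.2 ⟨(i, j), hij, hx⟩
  refine measure_mono_null hsub (measure_iUnion_null fun p => ?_)
  by_cases hp : p.1 = p.2
  · have : {x : E3 | p.1 ≠ p.2 ∧ x p.1 = x p.2} = ∅ := by
      ext x; simp [hp]
    simp [this]
  · exact measure_mono_null (fun x hx => hx.2) (null_diag p.1 p.2 hp)

lemma tet_inter_null (ε : ℝ) {σ τ : Equiv.Perm (Fin 3)} (h : σ ≠ τ) :
    volume (kuhnTet ε σ ∩ kuhnTet ε τ) = 0 := by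
  refine measure_mono_null ?_ null_noninj
  rintro x ⟨⟨hs1, hs2, hs3, _⟩, ht1, ht2, ht3, _⟩
  simp only [Set.mem_setOf_eq]
  by_contra hn
  push_neg at hn
  have hinj : ∀ i j : Fin 3, x i = x j → i = j := by
    intro i j hx
    by_contra hij
    exact (hn i j hij) hx
  have hne : ∀ (ρ : Equiv.Perm (Fin 3)) (i j : Fin 3), i ≠ j → x (ρ i) ≠ x (ρ j) := by
    intro ρ i j hij hx
    exact hij (ρ.injective (hinj _ _ hx))
  have hσ : StrictMono (x ∘ σ) := by
    rw [Fin.strictMono_iff_lt_succ]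
    intro i
    fin_cases i
    · exact lt_of_le_of_ne hs2 (hne σ 0 1 (by decide))
    · exact lt_of_le_of_ne hs3 (hne σ 1 2 (by decide))
  have hτ : StrictMono (x ∘ τ) := by
    rw [Fin.strictMono_iff_lt_succ]
    intro i
    fin_cases i
    · exact lt_of_le_of_ne ht2 (hne τ 0 1 (by decide))
    · exact lt_of_le_of_ne ht3 (hne τ 1 2 (by decide))
  have hr : Set.range (x ∘ σ) = Set.range (x ∘ τ) := by
    rw [σ.surjective.range_comp x, τ.surjective.range_comp x]
  have W : WellFoundedLT (Fin 3) := inferInstance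
  have hfg : (x ∘ σ : Fin 3 → ℝ) = x ∘ τ :=
    @Set.range_injOn_strictMono (Fin 3) ℝ inferInstance inferInstance W _ hσ _ hτ hr
  exact h (Equiv.ext fun k => hinj _ _ (congrFun hfg k))

lemma permIso_vol (ε : ℝ) (σ τ : Equiv.Perm (Fin 3)) :
    volume (kuhnTet ε τ) = volume (kuhnTet ε σ) := by
  have hmp := (permIso (τ.symm.trans σ)).measurePreserving
  have hpre := hmp.measure_preimage (tet_meas ε σ).nullMeasurableSet
  rw [permIso_preimage] at hpre
  have hperm : σ.trans (τ.symm.trans σ).symm = τ := by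
    ext k; simp
  rwa [hperm] at hpre

lemma tet_vol (ε : ℝ) (hε : 0 < ε) (σ : Equiv.Perm (Fin 3)) :
    volume (kuhnTet ε σ) = ENNReal.ofReal (ε ^ 3 / 6) := by
  have hsum : volume (cube ε) = ∑' τ : Equiv.Perm (Fin 3), volume (kuhnTet ε τ) := by
    rw [cube_eq_iUnion]
    exact measure_iUnion₀ (fun τ τ' h => tet_inter_null ε h)
      (fun τ => (tet_meas ε τ).nullMeasurableSet)
  rw [tsum_fintype] at hsum
  simp only [permIso_vol ε σ, Finset.sum_const, Finset.card_univ, Fintype.card_perm] at hsum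
  rw [cube_volume ε hε] at hsum
  have h6 : (6 : ENNReal) * volume (kuhnTet ε σ) = ENNReal.ofReal (ε ^ 3) := by
    rw [hsum, nsmul_eq_mul]
    norm_num [Nat.factorial]
  have hv : volume (kuhnTet ε σ) = ENNReal.ofReal (ε ^ 3) / 6 :=
    (ENNReal.eq_div_iff (by norm_num) (by norm_num)).2 h6
  rw [hv, ENNReal.ofReal_div_of_pos (by norm_num)]
  norm_num

lemma fderiv_ae (ε : ℝ) (v : E3 → ℝ) (σ : Equiv.Perm (Fin 3)) (a : E3) (c : ℝ)
    (hv : ∀ x ∈ kuhnTet ε σ, v x = ⟪a, x⟫ + c) (α : Fin 3) :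
    ∀ᵐ x, x ∈ kuhnTet ε σ → fderiv ℝ v x (e3 α) = a α := by
  have hfr : volume (frontier (kuhnTet ε σ)) = 0 := (tet_convex ε σ).addHaar_frontier volume
  filter_upwards [measure_eq_zero_iff_ae_notMem.mp hfr] with x hx hxT
  have hxint : x ∈ interior (kuhnTet ε σ) := by
    by_contra hxi
    exact hx (by rw [(tet_closed ε σ).frontier_eq]; exact ⟨hxT, hxi⟩)
  have hg : HasFDerivAt (fun y : E3 => ⟪a, y⟫ + c) (innerSL ℝ a) x :=
    ((innerSL ℝ a).hasFDerivAt).add_const c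
  have heq : v =ᶠ[nhds x] fun y => ⟪a, y⟫ + c :=
    Filter.eventuallyEq_of_mem (isOpen_interior.mem_nhds hxint)
      (fun y hy => hv y (interior_subset hy))
  rw [heq.fderiv_eq, hg.fderiv]
  simp [innerSL_apply_apply, e3, EuclideanSpace.inner_single_right]

lemma qEdge_apply (ε : ℝ) (σ : Equiv.Perm (Fin 3)) (α : Fin 3) (j : Fin 3) :
    qEdge ε σ α (σ j) = if σ.symm α < j then ε else 0 := by
  simp [qEdge, ev, Equiv.symm_apply_apply]

lemma qEdge2_apply (ε : ℝ) (σ : Equiv.Perm (Fin 3)) (α : Fin 3) (j : Fin 3) :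
    (qEdge ε σ α + ε • e3 α) (σ j) = if σ.symm α ≤ j then ε else 0 := by
  have hsa : (ε • e3 α) (σ j) = if j = σ.symm α then ε else 0 := by
    simp only [PiLp.smul_apply, e3, EuclideanSpace.single_apply, smul_eq_mul]
    have hiff : (σ j = α) ↔ (j = σ.symm α) :=
      ⟨fun h => by rw [← h, Equiv.symm_apply_apply], fun h => by rw [h, Equiv.apply_symm_apply]⟩
    split_ifs with h1 h2 h2 <;> simp_all [hiff]
  rw [PiLp.add_apply, qEdge_apply, hsa]
  rcases lt_trichotomy (σ.symm α) j with h | h | h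
  · simp [h, h.le, h.ne']
  · simp [← h, lt_irrefl, le_refl]
  · simp [h.ne, not_lt.2 h.le, not_le.2 h]

lemma qEdge_mem (ε : ℝ) (hε : 0 < ε) (σ : Equiv.Perm (Fin 3)) (α : Fin 3) :
    qEdge ε σ α ∈ kuhnTet ε σ ∧ qEdge ε σ α + ε • e3 α ∈ kuhnTet ε σ := by
  set k := σ.symm α
  have mono1 : ∀ j j' : Fin 3, j ≤ j' →
      (if k < j then ε else 0) ≤ if k < j' then ε else 0 := by
    intro j j' hj
    split_ifs with h1 h2
    · exact le_refl _
    · exact absurd (lt_of_lt_of_le h1 hj) h2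
    · exact hε.le
    · exact le_refl _
  have mono2 : ∀ j j' : Fin 3, j ≤ j' →
      (if k ≤ j then ε else 0) ≤ if k ≤ j' then ε else 0 := by
    intro j j' hj
    split_ifs with h1 h2
    · exact le_refl _
    · exact absurd (le_trans h1 hj) h2
    · exact hε.le
    · exact le_refl _
  have bd : ∀ p : Prop, ∀ [Decidable p], 0 ≤ (if p then ε else 0) ∧ (if p then ε else 0) ≤ ε := by
    intro p _
    split_ifs <;> simp [hε.le]
  constructor
  · refine ⟨?_, ?_, ?_, ?_⟩ <;> rw [qEdge_apply]
    · exact (bd _).1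
    · rw [qEdge_apply]; exact mono1 0 1 (by decide)
    · rw [qEdge_apply]; exact mono1 1 2 (by decide)
    · exact (bd _).2
  · refine ⟨?_, ?_, ?_, ?_⟩ <;> rw [qEdge2_apply]
    · exact (bd _).1
    · rw [qEdge2_apply]; exact mono2 0 1 (by decide)
    · rw [qEdge2_apply]; exact mono2 1 2 (by decide)
    · exact (bd _).2

lemma edge_diff (ε : ℝ) (hε : 0 < ε) (v : E3 → ℝ) (σ : Equiv.Perm (Fin 3)) (a : E3) (c : ℝ)
    (hv : ∀ x ∈ kuhnTet ε σ, v x = ⟪a, x⟫ + c) (α : Fin 3) :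
    v (qEdge ε σ α + ε • e3 α) - v (qEdge ε σ α) = ε * a α := by
  obtain ⟨m1, m2⟩ := qEdge_mem ε hε σ α
  rw [hv _ m2, hv _ m1, inner_add_right, real_inner_smul_right]
  have : ⟪a, e3 α⟫ = a α := by simp [e3, EuclideanSpace.inner_single_right]
  rw [this]; ring

end Stmt5Aux

open Stmt5Aux in
/-- Let `K = (0,ε)³` and let `v` be continuous on `closure K` and
piecewise affine with respect to a type A decomposition of `K` into six tetrahedra.
Then for every single tetrahedron `T` of the decomposition,
`∫_T ∂_α v dx = (ε³/6) (∇̃v|_T)_α`, where `(∇̃v|_T)_α` is the difference quotient of `v`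
along the edge of `T` parallel to `e_α`; consequently, for each direction `α`,
`∫_K ∂_α v dx` equals `ε³/6` times the sum of these difference quotients over the six
tetrahedra. -/
theorem stmt5 (ε : ℝ) (hε : 0 < ε) (v : E3 → ℝ)
    (hcont : ContinuousOn v (closure (cellK ε)))
    (hpl : ∀ σ : Equiv.Perm (Fin 3), ∃ (a : E3) (c : ℝ),
      ∀ x ∈ kuhnTet ε σ, v x = ⟪a, x⟫ + c) :
    (∀ (σ : Equiv.Perm (Fin 3)) (α : Fin 3),
        ∫ x in kuhnTet ε σ, fderiv ℝ v x (e3 α) ∂volume =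
          ε ^ 3 / 6 * ((v (qEdge ε σ α + ε • e3 α) - v (qEdge ε σ α)) / ε)) ∧
    (∀ α : Fin 3,
        ∫ x in cellK ε, fderiv ℝ v x (e3 α) ∂volume =
          ε ^ 3 / 6 * ∑ σ : Equiv.Perm (Fin 3),
            (v (qEdge ε σ α + ε • e3 α) - v (qEdge ε σ α)) / ε) := by
  choose a c hva using hpl
  have part1 : ∀ (σ : Equiv.Perm (Fin 3)) (α : Fin 3),
      ∫ x in kuhnTet ε σ, fderiv ℝ v x (e3 α) ∂volume =
        ε ^ 3 / 6 * ((v (qEdge ε σ α + ε • e3 α) - v (qEdge ε σ α)) / ε) := by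
    intro σ α
    have hae := fderiv_ae ε v σ (a σ) (c σ) (hva σ) α
    rw [setIntegral_congr_ae (tet_meas ε σ) (hae.mono fun x hx hxs => hx hxs)]
    rw [setIntegral_const, measureReal_def, tet_vol ε hε σ, ENNReal.toReal_ofReal (by positivity),
      smul_eq_mul, edge_diff ε hε v σ (a σ) (c σ) (hva σ) α]
    field_simp
  refine ⟨part1, fun α => ?_⟩
  have hint : ∀ σ : Equiv.Perm (Fin 3),
      IntegrableOn (fun x => fderiv ℝ v x (e3 α)) (kuhnTet ε σ) volume := by
    intro σ
    have hco : IntegrableOn (fun _ : E3 => a σ α) (kuhnTet ε σ) volume := by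
      apply integrableOn_const
      rw [tet_vol ε hε σ]
      exact ENNReal.ofReal_ne_top
      exact enorm_ne_top
    exact hco.congr ((ae_restrict_iff' (tet_meas ε σ)).2
      ((fderiv_ae ε v σ (a σ) (c σ) (hva σ) α).mono fun x hx hxs => (hx hxs).symm))
  have hsets : cellK ε =ᵐ[volume] cube ε := by
    refine (MeasureTheory.ae_eq_set).2 ⟨?_, ?_⟩
    · have hempty : cellK ε \ cube ε = ∅ := by
        ext x
        simp only [Set.mem_diff, Set.mem_empty_iff_false, iff_false, not_and, not_not]
        intro hx i
        exact ⟨(hx i).1.le, (hx i).2.le⟩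
      simp [hempty]
    · have hbig : volume (⋃ i : Fin 3, ({x : E3 | x i = 0} ∪ {x : E3 | x i = ε})) = 0 :=
        measure_iUnion_null fun i =>
          measure_union_null (null_coord i 0) (null_coord i ε)
      refine measure_mono_null ?_ hbig
      rintro x ⟨hxc, hxk⟩
      simp only [cellK, Set.mem_setOf_eq, Set.mem_Ioo, not_forall] at hxk
      obtain ⟨i, hi⟩ := hxk
      have h1 := (hxc i).1
      have h2 := (hxc i).2
      refine Set.mem_iUnion.2 ⟨i, ?_⟩
      rcases eq_or_lt_of_le h1 with h | h
      · exact Or.inl h.symm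
      · rcases eq_or_lt_of_le h2 with h' | h'
        · exact Or.inr h'
        · exact absurd ⟨h, h'⟩ hi
  calc ∫ x in cellK ε, fderiv ℝ v x (e3 α) ∂volume
      = ∫ x in cube ε, fderiv ℝ v x (e3 α) ∂volume := setIntegral_congr_set hsets
    _ = ∑' σ : Equiv.Perm (Fin 3), ∫ x in kuhnTet ε σ, fderiv ℝ v x (e3 α) ∂volume := by
        rw [cube_eq_iUnion]
        exact integral_iUnion_ae (fun σ => (tet_meas ε σ).nullMeasurableSet)
          (fun σ τ h => tet_inter_null ε h)
          (integrableOn_finite_iUnion.2 hint)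
    _ = ∑ σ : Equiv.Perm (Fin 3), ∫ x in kuhnTet ε σ, fderiv ℝ v x (e3 α) ∂volume :=
        tsum_fintype _
    _ = ε ^ 3 / 6 * ∑ σ : Equiv.Perm (Fin 3),
          (v (qEdge ε σ α + ε • e3 α) - v (qEdge ε σ α)) / ε := by
        rw [Finset.mul_sum]
        exact Finset.sum_congr rfl fun σ _ => part1 σ α
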